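/- Over R = k[[x,y,z]]/(y^2, z^2), for the matrix A = [[x, y], [0, z]] one has Ann.Coker(A) = (yz, xz) while Ann.Coker(A^T) = (xz); in particular Ann.Coker(A) ≠ Ann.Coker(A^T) when det(A) is nilpotent. -/

import Mathlib

open MvPowerSeries Finsupp

set_option linter.unnecessarySeqFocus false

/-- `Ann.Coker(A) = Ann(R^m / A(R^n))`. -/
noncomputable def annCoker {R : Type*} [CommRing R] {m n : ℕ}
    (A : Matrix (Fin m) (Fin n) R) : Ideal R :=
  Module.annihilator R ((Fin m → R) ⧸ LinearMap.range A.mulVecLin)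

namespace S11

lemma mem_annCoker_iff {S : Type*} [CommRing S] {m n : ℕ} (A : Matrix (Fin m) (Fin n) S)
    (r : S) : r ∈ annCoker A ↔ ∀ v : Fin m → S, ∃ w, A.mulVec w = r • v := by
  rw [annCoker, Module.mem_annihilator]
  constructor
  · intro h v
    have := h (Submodule.Quotient.mk v)
    rw [← Submodule.Quotient.mk_smul, Submodule.Quotient.mk_eq_zero] at this
    obtain ⟨w, hw⟩ := this
    exact ⟨w, by rwa [Matrix.mulVecLin_apply] at hw⟩
  · intro h q
    obtain ⟨v, rfl⟩ := Submodule.Quotient.mk_surjective _ q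
    rw [← Submodule.Quotient.mk_smul, Submodule.Quotient.mk_eq_zero]
    obtain ⟨w, hw⟩ := h v
    exact ⟨w, by rwa [Matrix.mulVecLin_apply]⟩

lemma mulVec_eq {S : Type*} [CommRing S] (x y z : S) (w : Fin 2 → S) :
    (!![x, y; 0, z]).mulVec w = ![x * w 0 + y * w 1, z * w 1] := by
  funext i
  fin_cases i <;> simp [Matrix.mulVec, dotProduct, Fin.sum_univ_two]

lemma mulVecT_eq {S : Type*} [CommRing S] (x y z : S) (w : Fin 2 → S) :
    (!![x, y; 0, z]).transpose.mulVec w = ![x * w 0, y * w 0 + z * w 1] := by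
  funext i
  fin_cases i <;> simp [Matrix.mulVec, dotProduct, Fin.sum_univ_two]

variable {k : Type*} [Field k]

lemma coeffXmul (s : Fin 3) (f : MvPowerSeries (Fin 3) k) (m : Fin 3 →₀ ℕ) :
    MvPowerSeries.coeff (single s 1 + m) (X s * f) = MvPowerSeries.coeff m f := by
  rw [X, coeff_add_monomial_mul, one_mul]

lemma coeffXmul0 (s : Fin 3) (f : MvPowerSeries (Fin 3) k) :
    MvPowerSeries.coeff (single s 1) (X s * f) = MvPowerSeries.coeff 0 f := by
  simpa using coeffXmul s f 0

lemma van1 {s : Fin 3} {f : MvPowerSeries (Fin 3) k} (m : Fin 3 →₀ ℕ) (h : m s = 0) :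
    MvPowerSeries.coeff m (X s * f) = 0 :=
  X_dvd_iff.mp (dvd_mul_right _ _) m h

lemma vanPow {s : Fin 3} {n : ℕ} {f : MvPowerSeries (Fin 3) k} (m : Fin 3 →₀ ℕ) (h : m s < n) :
    MvPowerSeries.coeff m (f * X s ^ n) = 0 :=
  X_pow_dvd_iff.mp (dvd_mul_left _ _) m h

/-- If all pure-x coefficients vanish, f ∈ (y, z). -/
lemma split1 (f : MvPowerSeries (Fin 3) k)
    (h : ∀ n, MvPowerSeries.coeff (single 0 n) f = 0) :
    ∃ u v, f = X 1 * u + X 2 * v := by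
  classical
  let g : MvPowerSeries (Fin 3) k := fun m => if m 1 = 0 then 0 else f m
  have hg : X (1 : Fin 3) ∣ g := by
    rw [X_dvd_iff]
    intro m hm
    show (if m 1 = 0 then 0 else f m) = 0
    rw [if_pos hm]
  have hfg : X (2 : Fin 3) ∣ (f - g) := by
    rw [X_dvd_iff]
    intro m hm
    show f m - (if m 1 = 0 then 0 else f m) = 0
    by_cases h1 : m 1 = 0
    · rw [if_pos h1, sub_zero]
      have : m = single 0 (m 0) := by ext s; fin_cases s <;> simp [h1, hm, Finsupp.single_apply]
      rw [this]; exact h (m 0)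
    · rw [if_neg h1, sub_self]
  obtain ⟨u, hu⟩ := hg
  obtain ⟨v, hv⟩ := hfg
  exact ⟨u, v, by rw [← hu, ← hv]; ring⟩

/-- If the constant coefficient vanishes, f ∈ (x, y, z). -/
lemma split2 (f : MvPowerSeries (Fin 3) k)
    (h : MvPowerSeries.coeff 0 f = 0) :
    ∃ u v w, f = X 0 * u + X 1 * v + X 2 * w := by
  classical
  let g : MvPowerSeries (Fin 3) k := fun m => if m 0 = 0 then 0 else f m
  let g' : MvPowerSeries (Fin 3) k := fun m => if m 0 = 0 ∧ m 1 ≠ 0 then f m else 0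
  have hg : X (0 : Fin 3) ∣ g := by
    rw [X_dvd_iff]; intro m hm
    show (if m 0 = 0 then 0 else f m) = 0
    rw [if_pos hm]
  have hg' : X (1 : Fin 3) ∣ g' := by
    rw [X_dvd_iff]; intro m hm
    show (if m 0 = 0 ∧ m 1 ≠ 0 then f m else 0) = 0
    simp [hm]
  have hfg : X (2 : Fin 3) ∣ (f - g - g') := by
    rw [X_dvd_iff]; intro m hm
    show f m - (if m 0 = 0 then 0 else f m) - (if m 0 = 0 ∧ m 1 ≠ 0 then f m else 0) = 0
    by_cases h0 : m 0 = 0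
    · rw [if_pos h0]
      by_cases h1 : m 1 = 0
      · rw [if_neg (by simp [h1]), sub_zero, sub_zero]
        have : m = 0 := by ext s; fin_cases s <;> simp [h0, h1, hm]
        rw [this] at *; exact h
      · rw [if_pos ⟨h0, h1⟩]; ring
    · rw [if_neg h0, if_neg (by simp [h0])]; ring
  obtain ⟨u, hu⟩ := hg
  obtain ⟨v, hv⟩ := hg'
  obtain ⟨w, hw⟩ := hfg
  exact ⟨u, v, w, by rw [← hu, ← hv, ← hw]; ring⟩

variable (k)

noncomputable abbrev II : Ideal (MvPowerSeries (Fin 3) k) :=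
  Ideal.span {(X 1 : MvPowerSeries (Fin 3) k) ^ 2, (X 2 : MvPowerSeries (Fin 3) k) ^ 2}

noncomputable abbrev xx : MvPowerSeries (Fin 3) k ⧸ II k := Ideal.Quotient.mk (II k) (X 0)
noncomputable abbrev yy : MvPowerSeries (Fin 3) k ⧸ II k := Ideal.Quotient.mk (II k) (X 1)
noncomputable abbrev zz : MvPowerSeries (Fin 3) k ⧸ II k := Ideal.Quotient.mk (II k) (X 2)

variable {k}

lemma hy2 : yy k * yy k = 0 := by
  rw [← map_mul, Ideal.Quotient.eq_zero_iff_mem, ← sq]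
  exact Ideal.subset_span (by simp)

lemma hz2 : zz k * zz k = 0 := by
  rw [← map_mul, Ideal.Quotient.eq_zero_iff_mem, ← sq]
  exact Ideal.subset_span (by simp)

/-- Lift a zero equation in the quotient to a span representation. -/
lemma liftI {f : MvPowerSeries (Fin 3) k} (h : Ideal.Quotient.mk (II k) f = 0) :
    ∃ g h', g * (X 1 : MvPowerSeries (Fin 3) k) ^ 2
      + h' * (X 2 : MvPowerSeries (Fin 3) k) ^ 2 = f := by
  rw [Ideal.Quotient.eq_zero_iff_mem] at h
  rwa [Ideal.mem_span_pair] at h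

variable (k)

set_option maxHeartbeats 1000000 in
theorem detNil : IsNilpotent (Matrix.det !![xx k, yy k; 0, zz k]) := by
  refine ⟨2, ?_⟩
  have hd : Matrix.det !![xx k, yy k; 0, zz k] = xx k * zz k := by
    rw [Matrix.det_fin_two_of]; ring
  rw [hd]
  linear_combination (xx k * xx k) * hz2 (k := k)

set_option maxHeartbeats 1000000 in
theorem annA_le : annCoker !![xx k, yy k; 0, zz k] ≤ Ideal.span {yy k * zz k, xx k * zz k} := by
  intro r hr
  obtain ⟨w, hw⟩ := (mem_annCoker_iff _ r).mp hr ![0, 1]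
  rw [mulVec_eq] at hw
  have h0 : xx k * w 0 + yy k * w 1 = 0 := by
    have := congrFun hw 0
    simpa only [Matrix.cons_val_zero, Pi.smul_apply, smul_eq_mul, mul_zero, mul_one] using this
  have h1 : zz k * w 1 = r := by
    have := congrFun hw 1
    simpa only [Matrix.cons_val_one, Matrix.head_cons, Matrix.cons_val_zero, Pi.smul_apply, smul_eq_mul,
      mul_zero, mul_one] using this
  obtain ⟨a, ha⟩ := Ideal.Quotient.mk_surjective (w 0)
  obtain ⟨b, hb⟩ := Ideal.Quotient.mk_surjective (w 1)
  obtain ⟨g, h', hgh⟩ := liftI (f := X 0 * a + X 1 * b) (by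
    rw [map_add, map_mul, map_mul, ha, hb]; exact h0)
  -- extract the constant coefficient of b
  have hb0 : MvPowerSeries.coeff 0 b = 0 := by
    have := congrArg (MvPowerSeries.coeff (single 1 1)) hgh
    rw [map_add, map_add, vanPow _ (by simp), vanPow _ (by simp),
      van1 _ (by simp), coeffXmul0, zero_add, zero_add] at this
    exact this.symm
  obtain ⟨p, q, s, hsp⟩ := split2 b hb0
  have hbR : w 1 = xx k * Ideal.Quotient.mk (II k) p + yy k * Ideal.Quotient.mk (II k) q
      + zz k * Ideal.Quotient.mk (II k) s := by
    rw [← hb, hsp, map_add, map_add, map_mul, map_mul, map_mul]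
  rw [Ideal.mem_span_pair]
  refine ⟨Ideal.Quotient.mk (II k) q, Ideal.Quotient.mk (II k) p, ?_⟩
  have h2 := hz2 (k := k)
  linear_combination h1 - zz k * hbR - Ideal.Quotient.mk (II k) s * h2

set_option maxHeartbeats 1000000 in
theorem annA_ge : Ideal.span {yy k * zz k, xx k * zz k} ≤ annCoker !![xx k, yy k; 0, zz k] := by
  rw [Ideal.span_le]
  rintro t ht
  simp only [Set.mem_insert_iff, Set.mem_singleton_iff] at ht
  have hy := hy2 (k := k)
  have hz := hz2 (k := k)
  rcases ht with rfl | rfl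
  · exact (mem_annCoker_iff _ _).mpr (fun v => ⟨![0, yy k * v 1 + zz k * v 0], by
      rw [mulVec_eq]
      funext i
      fin_cases i <;>
        simp only [Matrix.cons_val_zero, Matrix.cons_val_one, Matrix.head_cons,
          Pi.smul_apply, smul_eq_mul, Fin.isValue, Fin.zero_eta, Fin.mk_one]
      · linear_combination v 1 * hy
      · linear_combination v 0 * hz⟩)
  · exact (mem_annCoker_iff _ _).mpr (fun v => ⟨![zz k * v 0 - yy k * v 1, xx k * v 1], by
      rw [mulVec_eq]
      funext i
      fin_cases i <;>
        simp only [Matrix.cons_val_zero, Matrix.cons_val_one, Matrix.head_cons,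
          Pi.smul_apply, smul_eq_mul, Fin.isValue, Fin.zero_eta, Fin.mk_one]
      · ring
      · ring⟩)

set_option maxHeartbeats 1000000 in
theorem annA : annCoker !![xx k, yy k; 0, zz k] = Ideal.span {yy k * zz k, xx k * zz k} :=
  le_antisymm (annA_le k) (annA_ge k)

set_option maxHeartbeats 1000000 in
theorem annAT_le :
    annCoker (!![xx k, yy k; 0, zz k]).transpose ≤ Ideal.span {xx k * zz k} := by
  intro r hr
  obtain ⟨w, hw⟩ := (mem_annCoker_iff _ r).mp hr ![1, 0]
  obtain ⟨w', hw'⟩ := (mem_annCoker_iff _ r).mp hr ![0, 1]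
  rw [mulVecT_eq] at hw hw'
  have e1 : xx k * w 0 = r := by
    have := congrFun hw 0
    simpa only [Matrix.cons_val_zero, Pi.smul_apply, smul_eq_mul, mul_zero, mul_one] using this
  have e2 : yy k * w 0 + zz k * w 1 = 0 := by
    have := congrFun hw 1
    simpa only [Matrix.cons_val_one, Matrix.head_cons, Matrix.cons_val_zero, Pi.smul_apply, smul_eq_mul,
      mul_zero, mul_one] using this
  have e3 : xx k * w' 0 = 0 := by
    have := congrFun hw' 0
    simpa only [Matrix.cons_val_zero, Pi.smul_apply, smul_eq_mul, mul_zero, mul_one] using this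
  have e4 : yy k * w' 0 + zz k * w' 1 = r := by
    have := congrFun hw' 1
    simpa only [Matrix.cons_val_one, Matrix.head_cons, Matrix.cons_val_zero, Pi.smul_apply, smul_eq_mul,
      mul_zero, mul_one] using this
  obtain ⟨a, ha⟩ := Ideal.Quotient.mk_surjective (w 0)
  obtain ⟨b, hb⟩ := Ideal.Quotient.mk_surjective (w 1)
  obtain ⟨a', ha'⟩ := Ideal.Quotient.mk_surjective (w' 0)
  obtain ⟨b', hb'⟩ := Ideal.Quotient.mk_surjective (w' 1)
  obtain ⟨g1, h1, hE1⟩ := liftI (f := X 1 * a + X 2 * b) (by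
    rw [map_add, map_mul, map_mul, ha, hb]; exact e2)
  obtain ⟨g2, h2, hE2⟩ := liftI (f := X 0 * a') (by
    rw [map_mul, ha']; exact e3)
  -- coefficients of a at pure-x monomials vanish
  have hcA : ∀ n, MvPowerSeries.coeff (single 0 n) a = 0 := by
    intro n
    have := congrArg (MvPowerSeries.coeff (single 1 1 + single 0 n)) hE1
    rw [map_add, map_add, vanPow _ (by simp), vanPow _ (by simp), coeffXmul,
      van1 _ (by simp)] at this
    simpa using this.symm
  obtain ⟨u, v, hsplit⟩ := split1 a hcA
  -- coefficients of a' at pure-x monomials vanish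
  have hcA' : ∀ n, MvPowerSeries.coeff (single 0 n) a' = 0 := by
    intro n
    have := congrArg (MvPowerSeries.coeff (single 0 1 + single 0 n)) hE2
    rw [map_add, vanPow _ (by simp), vanPow _ (by simp), coeffXmul, add_zero] at this
    exact this.symm
  -- combine (1) and (4):  X0 * a ≡ X1 * a' + X2 * b'  (mod I)
  obtain ⟨g3, h3, hE3⟩ := liftI (f := X 0 * a - (X 1 * a' + X 2 * b')) (by
    rw [map_sub, map_add, map_mul, map_mul, map_mul, ha, ha', hb']
    rw [e1, e4, sub_self])
  -- hence coefficients of u at pure-x monomials vanish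
  have hcU : ∀ n, MvPowerSeries.coeff (single 0 n) u = 0 := by
    intro n
    have p1 : MvPowerSeries.coeff (single 0 1 + (single 1 1 + single 0 n)) (X 0 * a)
        = MvPowerSeries.coeff (single 0 n) u := by
      rw [coeffXmul, hsplit, map_add, coeffXmul, van1 _ (by simp), add_zero]
    have hM : (single (0:Fin 3) 1 + (single 1 1 + single 0 n) : Fin 3 →₀ ℕ)
        = single 1 1 + single 0 (n + 1) := by
      ext s
      fin_cases s <;> simp [Finsupp.single_apply] <;> omega
    have p2 : MvPowerSeries.coeff (single 0 1 + (single 1 1 + single 0 n)) (X 1 * a') = 0 := by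
      rw [hM, coeffXmul]; exact hcA' (n + 1)
    have p3 : MvPowerSeries.coeff (single 0 1 + (single 1 1 + single 0 n)) (X 2 * b') = 0 :=
      van1 _ (by simp)
    have := congrArg (MvPowerSeries.coeff (single 0 1 + (single 1 1 + single 0 n))) hE3
    rw [map_add, map_sub, map_add, vanPow _ (by simp), vanPow _ (by simp),
      p1, p2, p3] at this
    simpa using this.symm
  obtain ⟨u', u'', hsplit2⟩ := split1 u hcU
  -- now  r = x * (mk a)  lands in (xz)
  rw [Ideal.mem_span_singleton']
  refine ⟨Ideal.Quotient.mk (II k) (X 1 : MvPowerSeries (Fin 3) k) * Ideal.Quotient.mk (II k) u'' + Ideal.Quotient.mk (II k) v, ?_⟩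
  have hXa : (X 0 : MvPowerSeries (Fin 3) k) * a
      = (X 0 * u') * X 1 ^ 2 + (X 1 * u'' + v) * (X 0 * X 2) := by
    rw [hsplit, hsplit2]; ring
  have hmk := congrArg (Ideal.Quotient.mk (II k)) hXa
  simp only [map_add, map_mul, map_pow] at hmk
  rw [ha] at hmk
  have hy2' : Ideal.Quotient.mk (II k) (X 1 : MvPowerSeries (Fin 3) k) ^ 2 = 0 := by
    rw [← map_pow, Ideal.Quotient.eq_zero_iff_mem]
    exact Ideal.subset_span (by simp)
  linear_combination e1 - hmk
    - (Ideal.Quotient.mk (II k) (X 0 : MvPowerSeries (Fin 3) k)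
        * Ideal.Quotient.mk (II k) u') * hy2'

set_option maxHeartbeats 1000000 in
theorem annAT_ge :
    Ideal.span {xx k * zz k} ≤ annCoker (!![xx k, yy k; 0, zz k]).transpose := by
  rw [Ideal.span_le]
  rintro t ht
  simp only [Set.mem_singleton_iff] at ht
  subst ht
  exact (mem_annCoker_iff _ _).mpr (fun v => ⟨![zz k * v 0, xx k * v 1 - yy k * v 0], by
    rw [mulVecT_eq]
    funext i
    fin_cases i <;>
      simp only [Matrix.cons_val_zero, Matrix.cons_val_one, Matrix.head_cons,
        Pi.smul_apply, smul_eq_mul, Fin.isValue, Fin.zero_eta, Fin.mk_one]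
    · ring
    · ring⟩)

set_option maxHeartbeats 1000000 in
theorem annAT :
    annCoker (!![xx k, yy k; 0, zz k]).transpose = Ideal.span {xx k * zz k} :=
  le_antisymm (annAT_le k) (annAT_ge k)

theorem yzne : yy k * zz k ∉ Ideal.span {xx k * zz k} := by
  intro h
  rw [Ideal.mem_span_singleton'] at h
  obtain ⟨c, hc⟩ := h
  obtain ⟨c', hc'⟩ := Ideal.Quotient.mk_surjective c
  rw [← hc'] at hc
  obtain ⟨g, h', hgh⟩ := liftI (f := X 0 * (X 2 * c') - X 1 * X 2) (by
    rw [map_sub, map_mul, map_mul, map_mul]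
    linear_combination hc)
  have := congrArg (MvPowerSeries.coeff (single 1 1 + single 2 1)) hgh
  rw [map_add, map_sub, vanPow _ (by simp), vanPow _ (by simp),
    van1 _ (by simp), coeffXmul, MvPowerSeries.coeff_index_single_self_X] at this
  simp at this

set_option maxHeartbeats 400000 in
theorem annNe :
    annCoker !![xx k, yy k; 0, zz k] ≠ annCoker (!![xx k, yy k; 0, zz k]).transpose := by
  intro h
  apply yzne k
  rw [← annAT k, ← h, annA k]
  exact Ideal.subset_span (by simp)

end S11

/-- Over `R = k[[x,y,z]]/(y², z²)`, for `A = [[x, y], [0, z]]` one has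
`Ann.Coker(A) = (yz, xz)` while `Ann.Coker(Aᵀ) = (xz)`; in particular
`Ann.Coker(A) ≠ Ann.Coker(Aᵀ)` (and `det A = xz` is nilpotent). -/
theorem stmt_11 (k : Type*) [Field k] :
    let P := MvPowerSeries (Fin 3) k
    let I : Ideal P := Ideal.span {(MvPowerSeries.X 1 : P) ^ 2, (MvPowerSeries.X 2 : P) ^ 2}
    let R := P ⧸ I
    let x : R := Ideal.Quotient.mk I (MvPowerSeries.X 0)
    let y : R := Ideal.Quotient.mk I (MvPowerSeries.X 1)
    let z : R := Ideal.Quotient.mk I (MvPowerSeries.X 2)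
    let A : Matrix (Fin 2) (Fin 2) R := !![x, y; 0, z]
    IsNilpotent A.det ∧
      annCoker A = Ideal.span {y * z, x * z} ∧
      annCoker A.transpose = Ideal.span {x * z} ∧
      annCoker A ≠ annCoker A.transpose := by
  intro P I R x y z A
  exact ⟨S11.detNil k, S11.annA k, S11.annAT k, S11.annNe k⟩
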